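/- Let A be an abelian group (written multiplicatively), let ψ be an automorphism of A, and let m be a positive integer. On the product group B = Fin m → A (with pointwise multiplication) define the automorphism Ψ by (Ψ b)(i) = b(i−1) for 1 ≤ i ≤ m−1 and (Ψ b)(0) = ψ(b(m−1)) (the cyclic shift twisted by ψ). Then the inclusion of A into B as the 0-th coordinate induces an isomorphism of coinvariant groups A_ψ ≅ B_Ψ. -/

import Mathlib

/-- The automorphism `Ψ` of `B = Fin m → A` given by the cyclic shift twisted by `ψ`:
`(Ψ b) i = b (i - 1)` for `i ≠ 0` and `(Ψ b) 0 = ψ (b (m - 1))` (here `i - 1` is the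
cyclic subtraction in `Fin m`, so `0 - 1 = m - 1`). -/
def shiftAut {A : Type*} [CommGroup A] (ψ : A ≃* A) (m : ℕ) [NeZero m] :
    (Fin m → A) ≃* (Fin m → A) where
  toFun b i := if i = 0 then ψ (b (i - 1)) else b (i - 1)
  invFun b i := if i + 1 = 0 then ψ.symm (b (i + 1)) else b (i + 1)
  left_inv b := by
    funext i
    by_cases h : i + 1 = 0
    · simp [h, add_sub_cancel_right, eq_neg_of_add_eq_zero_left h]
    · simp [h, add_sub_cancel_right]
  right_inv b := by
    funext i
    by_cases h : i = 0
    · simp [h, sub_add_cancel]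
    · simp [h, sub_add_cancel]
  map_mul' b b' := by
    funext i
    by_cases h : i = 0
    · simp [h]
    · simp [h]

/-- The group of `σ`-coinvariants `X_σ` of an automorphism `σ` of an abelian group `X`:
the quotient of `X` by the subgroup `{σ x * x⁻¹ : x ∈ X}`. -/
abbrev coinvariants {X : Type*} [CommGroup X] (σ : X ≃* X) :=
  X ⧸ (σ.toMonoidHom / MonoidHom.id X).range

set_option linter.unnecessarySimpa false

section Aux

variable {A : Type*} [CommGroup A] (ψ : A ≃* A) (m : ℕ) [NeZero m]

private lemma shiftAut_apply (b : Fin m → A) (i : Fin m) :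
    shiftAut ψ m b i = if i = 0 then ψ (b (i - 1)) else b (i - 1) := rfl

private lemma mk_shift (b : Fin m → A) :
    (QuotientGroup.mk (shiftAut ψ m b) : coinvariants (shiftAut ψ m)) = QuotientGroup.mk b := by
  rw [QuotientGroup.eq]
  have h : (shiftAut ψ m b) / b ∈
      ((shiftAut ψ m).toMonoidHom / MonoidHom.id (Fin m → A)).range := ⟨b, rfl⟩
  have h2 := ((shiftAut ψ m).toMonoidHom / MonoidHom.id (Fin m → A)).range.inv_mem h
  simpa [div_eq_mul_inv, mul_inv_rev, mul_comm] using h2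

private lemma shift_mulSingle_ne (i : Fin m) (h : i + 1 ≠ 0) (x : A) :
    shiftAut ψ m (Pi.mulSingle i x) = Pi.mulSingle (i + 1) x := by
  funext j
  rw [shiftAut_apply]
  by_cases hj : j = 0
  · subst hj
    have hi : (-1 : Fin m) ≠ i := by
      intro he
      exact h (by rw [← he]; simp)
    rw [if_pos rfl, (show (0 : Fin m) - 1 = -1 by simp),
      Pi.mulSingle_eq_of_ne hi, Pi.mulSingle_eq_of_ne (Ne.symm h), map_one]
  · have : (j - 1 = i) ↔ (j = i + 1) := by
      constructor <;> intro he <;> [rw [← he]; rw [he]] <;> simp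
    simp [hj, Pi.mulSingle_apply, this]

private lemma shift_mulSingle_last (x : A) :
    shiftAut ψ m (Pi.mulSingle (-1 : Fin m) x) = Pi.mulSingle (0 : Fin m) (ψ x) := by
  funext j
  rw [shiftAut_apply]
  by_cases hj : j = 0
  · subst hj
    rw [if_pos rfl, (show (0 : Fin m) - 1 = -1 by simp), Pi.mulSingle_eq_same,
      Pi.mulSingle_eq_same]
  · have : j - 1 ≠ -1 := fun he => hj (by have := congrArg (· + 1) he; simpa using this)
    simp [hj, Pi.mulSingle_apply, this]

private lemma mk_mulSingle (i : Fin m) (x : A) :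
    (QuotientGroup.mk (Pi.mulSingle i x) : coinvariants (shiftAut ψ m)) =
      QuotientGroup.mk (Pi.mulSingle (0 : Fin m) x) := by
  obtain ⟨k, hk⟩ := i
  induction k with
  | zero => rfl
  | succ n ih =>
    have hn : n < m := Nat.lt_of_succ_lt hk
    have h1 : ((⟨n, hn⟩ : Fin m) + 1) = ⟨n + 1, hk⟩ := by
      ext; simp [Fin.add_def, Nat.mod_eq_of_lt hk]
    have h2 : ((⟨n, hn⟩ : Fin m) + 1) ≠ 0 := by
      rw [h1]; exact fun he => by simpa using congrArg Fin.val he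
    calc (QuotientGroup.mk (Pi.mulSingle (⟨n+1, hk⟩ : Fin m) x) : coinvariants (shiftAut ψ m))
        = QuotientGroup.mk (shiftAut ψ m (Pi.mulSingle (⟨n, hn⟩ : Fin m) x)) := by
          rw [shift_mulSingle_ne ψ m _ h2 x, h1]
      _ = QuotientGroup.mk (Pi.mulSingle (⟨n, hn⟩ : Fin m) x) := mk_shift ψ m _
      _ = QuotientGroup.mk (Pi.mulSingle (0 : Fin m) x) := ih hn

/-- The product homomorphism `(Fin m → A) →* A`. -/
private def prodHom : (Fin m → A) →* A where
  toFun b := ∏ i, b i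
  map_one' := by simp
  map_mul' b b' := by simp [Finset.prod_mul_distrib]

private lemma prod_shift (b : Fin m → A) :
    ∏ i, shiftAut ψ m b i = (ψ (b (-1)) / b (-1)) * ∏ i, b i := by
  have key : ∀ i : Fin m, shiftAut ψ m b i =
      (if i = 0 then ψ (b (-1)) / b (-1) else 1) * b (i - 1) := by
    intro i
    rw [shiftAut_apply]
    by_cases hi : i = 0
    · subst hi
      have : (0 : Fin m) - 1 = -1 := by simp
      simp [this]
    · simp [hi]
  rw [Finset.prod_congr rfl fun i _ => key i, Finset.prod_mul_distrib]
  congr 1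
  · rw [Finset.prod_ite_eq' Finset.univ (0 : Fin m) (fun _ => ψ (b (-1)) / b (-1))]
    simp
  · exact Fintype.prod_equiv (Equiv.subRight 1) _ _ fun i => rfl

end Aux

/-- Let `A` be a multiplicative abelian group with an automorphism `ψ`
and let `m` be a positive integer.  On `B = Fin m → A` consider the automorphism `Ψ`
given by the cyclic shift twisted by `ψ` (i.e. `(Ψ b) i = b (i - 1)` for `1 ≤ i ≤ m - 1`
and `(Ψ b) 0 = ψ (b (m - 1))`).  Then the inclusion of `A` into `B` as the `0`-th
coordinate induces an isomorphism of coinvariant groups `A_ψ ≅ B_Ψ`. -/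
theorem stmt_6 {A : Type*} [CommGroup A] (ψ : A ≃* A) (m : ℕ) [NeZero m] :
    ∃ e : coinvariants ψ ≃* coinvariants (shiftAut ψ m),
      ∀ a : A, e (QuotientGroup.mk a) = QuotientGroup.mk (Pi.mulSingle (0 : Fin m) a) := by
  set NA := (ψ.toMonoidHom / MonoidHom.id A).range with hNA
  set NB := ((shiftAut ψ m).toMonoidHom / MonoidHom.id (Fin m → A)).range with hNB
  have key0 : ∀ a : A,
      (QuotientGroup.mk (Pi.mulSingle (0 : Fin m) (ψ a)) : coinvariants (shiftAut ψ m)) =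
        QuotientGroup.mk (Pi.mulSingle (0 : Fin m) a) := by
    intro a
    rw [← shift_mulSingle_last ψ m a, mk_shift]
    exact mk_mulSingle ψ m (-1) a
  have hf : ∀ x ∈ NA,
      ((QuotientGroup.mk' NB).comp (MonoidHom.mulSingle (fun _ : Fin m => A) 0)) x = 1 := by
    rintro _ ⟨a, rfl⟩
    have hx : (ψ.toMonoidHom / MonoidHom.id A) a = ψ a / a := rfl
    rw [hx]
    simp only [MonoidHom.comp_apply, MonoidHom.mulSingle_apply, map_div]
    rw [div_eq_one]
    have : (QuotientGroup.mk' NB) (Pi.mulSingle (0 : Fin m) (ψ a)) =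
        QuotientGroup.mk (Pi.mulSingle (0 : Fin m) (ψ a)) := rfl
    rw [this, QuotientGroup.mk'_apply, key0 a]
  have hg : ∀ b ∈ NB, ((QuotientGroup.mk' NA).comp (prodHom m)) b = 1 := by
    rintro _ ⟨b, rfl⟩
    have hx : ((shiftAut ψ m).toMonoidHom / MonoidHom.id (Fin m → A)) b =
        shiftAut ψ m b / b := rfl
    rw [hx]
    simp only [MonoidHom.comp_apply, map_div]
    have hp : prodHom m (shiftAut ψ m b) = (ψ (b (-1)) / b (-1)) * prodHom m b := by
      show ∏ i, shiftAut ψ m b i = (ψ (b (-1)) / b (-1)) * ∏ i, b i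
      exact prod_shift ψ m b
    rw [hp, map_mul, mul_div_assoc, div_self', mul_one, QuotientGroup.mk'_apply,
      QuotientGroup.eq_one_iff]
    exact ⟨b (-1), rfl⟩
  set f : coinvariants ψ →* coinvariants (shiftAut ψ m) :=
    QuotientGroup.lift NA ((QuotientGroup.mk' NB).comp (MonoidHom.mulSingle (fun _ : Fin m => A) 0)) hf with hfdef
  set g : coinvariants (shiftAut ψ m) →* coinvariants ψ :=
    QuotientGroup.lift NB ((QuotientGroup.mk' NA).comp (prodHom m)) hg with hgdef
  have hfmk : ∀ a : A, f (QuotientGroup.mk a) = QuotientGroup.mk (Pi.mulSingle (0 : Fin m) a) :=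
    fun a => rfl
  have hgmk : ∀ b : Fin m → A, g (QuotientGroup.mk b) = QuotientGroup.mk (∏ i, b i) :=
    fun b => rfl
  have h1 : g.comp f = MonoidHom.id (coinvariants ψ) := by
    refine QuotientGroup.monoidHom_ext NA (MonoidHom.ext fun a => ?_)
    simp only [MonoidHom.comp_apply, QuotientGroup.mk'_apply, MonoidHom.id_apply]
    rw [hfmk a, hgmk]
    congr 1
    simp [Pi.mulSingle_apply]
  have h2 : f.comp g = MonoidHom.id (coinvariants (shiftAut ψ m)) := by
    refine QuotientGroup.monoidHom_ext NB (MonoidHom.ext fun b => ?_)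
    simp only [MonoidHom.comp_apply, QuotientGroup.mk'_apply, MonoidHom.id_apply]
    rw [hgmk b, hfmk]
    have e1 : Pi.mulSingle (0 : Fin m) (∏ i, b i) =
        ∏ i, (Pi.mulSingle (0 : Fin m) (b i) : Fin m → A) := by
      funext j
      rw [Finset.prod_apply]
      by_cases hj : j = 0 <;> simp [hj, Pi.mulSingle_apply]
    rw [e1]
    have e2 : (QuotientGroup.mk (∏ i, (Pi.mulSingle (0 : Fin m) (b i) : Fin m → A)) :
        coinvariants (shiftAut ψ m)) = ∏ i, QuotientGroup.mk ((Pi.mulSingle (0 : Fin m) (b i) : Fin m → A)) := by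
      exact map_prod (QuotientGroup.mk' NB) (fun i => (Pi.mulSingle (0 : Fin m) (b i) : Fin m → A)) Finset.univ
    rw [e2]
    have e3 : ∀ i : Fin m, (QuotientGroup.mk (Pi.mulSingle (0 : Fin m) (b i)) :
        coinvariants (shiftAut ψ m)) = QuotientGroup.mk (Pi.mulSingle i (b i)) :=
      fun i => (mk_mulSingle ψ m i (b i)).symm
    rw [Finset.prod_congr rfl fun i _ => e3 i]
    have e4 : (∏ i, QuotientGroup.mk ((Pi.mulSingle i (b i) : Fin m → A)) : coinvariants (shiftAut ψ m)) =
        QuotientGroup.mk (∏ i, (Pi.mulSingle i (b i) : Fin m → A)) := by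
      exact (map_prod (QuotientGroup.mk' NB) (fun i => (Pi.mulSingle i (b i) : Fin m → A)) Finset.univ).symm
    rw [e4, Finset.univ_prod_mulSingle b]
    rfl
  exact ⟨MonoidHom.toMulEquiv f g h1 h2, hfmk⟩
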